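/- Let X = (V,E) be a graph, (H_v)_{v∈V} a family of groups, Y = (V',E') an induced subgraph of X. Let P(H,X) denote the graph product of the H_v over X, i.e. the quotient of the free product ∗_{v∈V} H_v by the normal subgroup generated by commutators [h,k] for h ∈ H_v, k ∈ H_w with (v,w) ∈ E. Then the natural map P(H,Y) → P(H,X) induced by the inclusion Y ↪ X is injective; its image is the subgroup of P(H,X) generated by the images of H_v for v ∈ V'. -/

import Mathlib

/-- The graph product of a family of groups `H v` over a graph with edge relation `E`:
the quotient of the free product by the commutators of elements lying in adjacent
vertex groups. -/
abbrev GraphProduct {V : Type*} (E : V → V → Prop) (H : V → Type*) [∀ v, Group (H v)] :=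
  Monoid.CoprodI H ⧸ Subgroup.normalClosure
    {x : Monoid.CoprodI H | ∃ (v w : V) (h : H v) (k : H w), E v w ∧
      x = (Monoid.CoprodI.of h)⁻¹ * (Monoid.CoprodI.of k)⁻¹ *
            Monoid.CoprodI.of h * Monoid.CoprodI.of k}

/-- The canonical map from a vertex group into the graph product. -/
def GraphProduct.of {V : Type*} (E : V → V → Prop) (H : V → Type*) [∀ v, Group (H v)]
    (v : V) : H v →* GraphProduct E H :=
  (QuotientGroup.mk' _).comp Monoid.CoprodI.of

/-- Adjacent vertex groups commute in the graph product. -/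
lemma GraphProduct.comm_rel {V : Type*} (E : V → V → Prop) (H : V → Type*)
    [∀ v, Group (H v)] {v w : V} (hvw : E v w) (h : H v) (k : H w) :
    (GraphProduct.of E H v h)⁻¹ * (GraphProduct.of E H w k)⁻¹ *
      GraphProduct.of E H v h * GraphProduct.of E H w k = 1 := by
  show ((QuotientGroup.mk ((Monoid.CoprodI.of h)⁻¹ * (Monoid.CoprodI.of k)⁻¹ *
      Monoid.CoprodI.of h * Monoid.CoprodI.of k)) : GraphProduct E H) = 1
  rw [QuotientGroup.eq_one_iff]
  exact Subgroup.subset_normalClosure ⟨v, w, h, k, hvw, rfl⟩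

/-- The graph product is generated by the images of the vertex groups. -/
lemma GraphProduct.closure_top {V : Type*} (E : V → V → Prop) (H : V → Type*)
    [∀ v, Group (H v)] :
    Subgroup.closure (⋃ v, Set.range (GraphProduct.of E H v)) = ⊤ := by
  rw [eq_top_iff]
  rintro x -
  obtain ⟨y, rfl⟩ := QuotientGroup.mk_surjective x
  induction y using Monoid.CoprodI.induction_on with
  | one => simpa using Subgroup.one_mem _
  | of i m => exact Subgroup.subset_closure (Set.mem_iUnion.2 ⟨i, ⟨m, rfl⟩⟩)
  | mul x y hx hy =>
    rw [QuotientGroup.mk_mul]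
    exact Subgroup.mul_mem _ hx hy

/-- For an induced subgraph `Y` (on a vertex set `V' ⊆ V`) of a graph `X`, the natural
map `P(H,Y) → P(H,X)` of graph products is injective, and its image is the subgroup
generated by the images of the vertex groups `H v`, `v ∈ V'`. -/
theorem stmt18 {V : Type*} (E : V → V → Prop) (hsym : Symmetric E)
    (H : V → Type*) [∀ v, Group (H v)] (V' : Set V) :
    ∃ ι : GraphProduct (fun a b : V' => E a b) (fun a : V' => H a) →* GraphProduct E H,
      (∀ (v : V') (h : H v),
        ι (GraphProduct.of (fun a b : V' => E a b) (fun a : V' => H a) v h) =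
          GraphProduct.of E H (v : V) h) ∧
      Function.Injective ι ∧
      MonoidHom.range ι =
        Subgroup.closure (⋃ v : V', Set.range (GraphProduct.of E H (v : V))) := by
  classical
  set E' : V' → V' → Prop := fun a b => E a b with hE'
  set H' : V' → Type _ := fun a => H a with hH'
  -- the map P(H,Y) → P(H,X)
  let f : Monoid.CoprodI H' →* GraphProduct E H :=
    Monoid.CoprodI.lift (fun v => GraphProduct.of E H (v : V))
  have hf : Subgroup.normalClosure
      {x : Monoid.CoprodI H' | ∃ (v w : V') (h : H' v) (k : H' w), E' v w ∧
        x = (Monoid.CoprodI.of h)⁻¹ * (Monoid.CoprodI.of k)⁻¹ *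
              Monoid.CoprodI.of h * Monoid.CoprodI.of k} ≤ f.ker := by
    apply Subgroup.normalClosure_le_normal
    rintro x ⟨v, w, h, k, hvw, rfl⟩
    simp only [SetLike.mem_coe, MonoidHom.mem_ker, map_mul, map_inv,
      Monoid.CoprodI.lift_of, f]
    exact GraphProduct.comm_rel E H hvw h k
  refine ⟨QuotientGroup.lift _ f hf, ?_, ?_, ?_⟩
  · intro v h
    show f (Monoid.CoprodI.of h) = _
    simp [f]
  · -- injectivity via the retraction
    set ι := QuotientGroup.lift _ f hf with hι
    let g : ∀ v : V, H v →* GraphProduct E' H' := fun v =>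
      if hv : v ∈ V' then (GraphProduct.of E' H' ⟨v, hv⟩ : H v →* _) else 1
    let p : Monoid.CoprodI H →* GraphProduct E' H' := Monoid.CoprodI.lift g
    have hp : Subgroup.normalClosure
        {x : Monoid.CoprodI H | ∃ (v w : V) (h : H v) (k : H w), E v w ∧
          x = (Monoid.CoprodI.of h)⁻¹ * (Monoid.CoprodI.of k)⁻¹ *
                Monoid.CoprodI.of h * Monoid.CoprodI.of k} ≤ p.ker := by
      apply Subgroup.normalClosure_le_normal
      rintro x ⟨v, w, h, k, hvw, rfl⟩
      simp only [SetLike.mem_coe, MonoidHom.mem_ker, map_mul, map_inv,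
        Monoid.CoprodI.lift_of, p]
      by_cases hv : v ∈ V'
      · by_cases hw : w ∈ V'
        · simp only [g, dif_pos hv, dif_pos hw]
          exact GraphProduct.comm_rel E' H' (v := ⟨v, hv⟩) (w := ⟨w, hw⟩) hvw h k
        · simp [g, dif_pos hv, dif_neg hw]
      · simp [g, dif_neg hv]
    let π : GraphProduct E H →* GraphProduct E' H' := QuotientGroup.lift _ p hp
    have hretr : π.comp ι = MonoidHom.id _ := by
      apply QuotientGroup.monoidHom_ext
      apply Monoid.CoprodI.ext_hom
      intro v
      ext h
      show π (f (Monoid.CoprodI.of h)) = QuotientGroup.mk (Monoid.CoprodI.of h)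
      have : f (Monoid.CoprodI.of h) =
          QuotientGroup.mk (Monoid.CoprodI.of (M := H) h) := by
        simp [f, GraphProduct.of]
      rw [this]
      show p (Monoid.CoprodI.of h) = _
      simp only [Monoid.CoprodI.lift_of, p, g, dif_pos v.2]
      rfl
    intro a b hab
    have := congrArg π hab
    calc a = π (ι a) := by rw [show π (ι a) = (π.comp ι) a from rfl, hretr]; rfl
    _ = π (ι b) := this
    _ = b := by rw [show π (ι b) = (π.comp ι) b from rfl, hretr]; rfl
  · -- range
    have h1 : MonoidHom.range (QuotientGroup.lift _ f hf) =
        (Subgroup.closure (⋃ v : V', Set.range (GraphProduct.of E' H' v))).map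
          (QuotientGroup.lift _ f hf) := by
      rw [GraphProduct.closure_top, ← MonoidHom.range_eq_map]
    rw [h1, MonoidHom.map_closure]
    congr 1
    rw [Set.image_iUnion]
    refine Set.iUnion_congr fun v => ?_
    rw [← Set.range_comp]
    congr 1
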